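/- Let Ω be an algebraically closed field with proper algebraically closed subfield k, equipped with the pair topology (closed sets: finite unions of preimages of products of the linear-dependence loci Y_{kᵢ} under polynomial maps). Then every proper closed subset of k (with the subspace topology from Ω) is finite. -/

import Mathlib

/-- A basic closed set of the pair topology on `Ωⁿ`: the preimage of a product
`Y_{k₁} × ⋯ × Y_{kₘ}` of linear-dependence loci under a polynomial map. -/
def IsBasicClosed {Ω : Type*} [Field Ω] (k : Subfield Ω) {n : ℕ}
    (C : Set (Fin n → Ω)) : Prop :=
  ∃ (m : ℕ) (ks : Fin m → ℕ) (p : (i : Fin m) → Fin (ks i) → MvPolynomial (Fin n) Ω),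
    C = {α | ∀ i, ¬ LinearIndependent k (fun j => MvPolynomial.eval α (p i j))}

/-- A closed set of the pair topology: a finite union of basic closed sets. -/
def IsPairClosed {Ω : Type*} [Field Ω] (k : Subfield Ω) {n : ℕ}
    (C : Set (Fin n → Ω)) : Prop :=
  ∃ (t : ℕ) (B : Fin t → Set (Fin n → Ω)),
    (∀ i, IsBasicClosed k (B i)) ∧ C = ⋃ i, B i

open Polynomial

/-- Coordinates of `P.eval α` (for `α ∈ k`) w.r.t. a `k`-basis of `Ω` are values of
polynomials over `k`. -/
lemma repr_eval {Ω : Type*} [Field Ω] (k : Subfield Ω) {ι : Type*} (b : Module.Basis ι k Ω)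
    (P : Polynomial Ω) (α : k) (β : ι) :
    (∑ n ∈ P.support, Polynomial.C (b.repr (P.coeff n) β) * Polynomial.X ^ n : Polynomial k).eval α
      = b.repr (P.eval (α : Ω)) β := by
  have h1 : P.eval (α : Ω) = ∑ n ∈ P.support, (α ^ n : k) • P.coeff n := by
    rw [Polynomial.eval_eq_sum, Polynomial.sum_def]
    refine Finset.sum_congr rfl fun n _ => ?_
    have : ((α : Ω)) ^ n = ((α ^ n : k) : Ω) := by push_cast; ring
    rw [this]
    show _ = ((α ^ n : k) : Ω) * P.coeff n
    ring
  rw [h1, map_sum, Polynomial.eval_finset_sum]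
  simp only [Polynomial.eval_mul, Polynomial.eval_C, Polynomial.eval_pow, Polynomial.eval_X,
    map_smul, Finsupp.coe_finset_sum, Finset.sum_apply, Finsupp.coe_smul, Pi.smul_apply,
    smul_eq_mul]
  exact Finset.sum_congr rfl fun n _ => by ring


/-- Linear independence of finitely many vectors with entries in a domain is preserved
when mapping into the fraction field. -/
lemma li_frac {R F : Type*} [CommRing R] [IsDomain R] [Field F] [Algebra R F]
    [IsFractionRing R F] {s : ℕ} {T : Type*} (N : Fin s → T → R)
    (h : LinearIndependent R N) :
    LinearIndependent F (fun j (β : T) => algebraMap R F (N j β)) := by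
  rw [Fintype.linearIndependent_iff] at h ⊢
  intro u hu
  obtain ⟨d, hd⟩ := IsLocalization.exist_integer_multiples (nonZeroDivisors R) Finset.univ u
  choose! v hv using hd
  have hv' : ∀ j, algebraMap R F (v j) = (d : R) • u j := fun j => hv j (Finset.mem_univ j)
  have hz : ∀ j, v j = 0 := by
    apply h
    funext β
    apply IsFractionRing.injective R F
    have := congrFun hu β
    simp only [Finset.sum_apply, Pi.smul_apply, smul_eq_mul, Pi.zero_apply] at this ⊢
    rw [map_sum, map_zero]
    calc ∑ j, algebraMap R F (v j * N j β)
        = (d : R) • ∑ j, u j * algebraMap R F (N j β) := by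
          rw [Finset.smul_sum]
          refine Finset.sum_congr rfl fun j _ => ?_
          simp only [map_mul, hv' j, Algebra.smul_def]
          ring
      _ = 0 := by rw [this, smul_zero]
  intro j
  have hdu : IsUnit (algebraMap R F (d : R)) := IsLocalization.map_units F d
  have : algebraMap R F (d : R) * u j = 0 := by
    rw [← Algebra.smul_def, ← hv' j, hz j, map_zero]
  rcases mul_eq_zero.mp this with h0 | h0
  · exact absurd h0 hdu.ne_zero
  · exact h0

/-- From a linearly independent finite family of vectors over a field, extract a
"dual" family realising the identity matrix. -/
lemma exists_dual {F : Type*} [Field F] {s : ℕ} {T : Type*} [Fintype T] [DecidableEq T]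
    (N : Fin s → T → F) (h : LinearIndependent F N) :
    ∃ U : T → Fin s → F, ∀ j j', ∑ β, N j β * U β j' = if j' = j then 1 else 0 := by
  classical
  set f : (Fin s → F) →ₗ[F] (T → F) :=
    LinearMap.lsum F (fun _ => F) ℕ (fun i => LinearMap.id.smulRight (N i)) with hf
  have hker : LinearMap.ker f = ⊥ := (Fintype.linearIndependent_iff').mp h
  obtain ⟨g, hg⟩ := f.exists_leftInverse_of_injective hker
  refine ⟨fun β => g (Pi.single β 1), fun j j' => ?_⟩
  have h1 : f (Pi.single j 1) = N j := by
    funext β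
    rw [hf]
    simp only [LinearMap.lsum_apply, LinearMap.coe_comp, LinearMap.coe_sum,
      Finset.sum_apply, Function.comp_apply, LinearMap.coe_proj,
      LinearMap.smulRight_apply, LinearMap.id_apply, Function.eval,
      Pi.single_apply, ite_smul, one_smul, zero_smul]
    simp [apply_ite (fun g : T → F => g β), Finset.sum_ite_eq']
  have h2 : g (N j) = Pi.single j 1 := by
    rw [← h1, ← LinearMap.comp_apply, hg, LinearMap.id_apply]
  have h3 : g (N j) = ∑ β, N j β • g (Pi.single β 1) := by
    conv_lhs => rw [show N j = ∑ β : T, N j β • (Pi.single β 1 : T → F) by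
      simp_rw [← Pi.single_smul, smul_eq_mul, mul_one, Finset.univ_sum_single]]
    rw [map_sum]
    simp_rw [map_smul]
  have := h2.symm.trans h3
  have := congrFun this j'
  simpa [Pi.single_apply, Finset.sum_apply] using this.symm

lemma mv_eval {Ω : Type*} [CommSemiring Ω] (f : MvPolynomial (Fin 1) Ω) (x : Ω) :
    MvPolynomial.eval (fun _ => x) f
      = (MvPolynomial.aeval (fun _ : Fin 1 => (Polynomial.X : Polynomial Ω)) f).eval x := by
  induction f using MvPolynomial.induction_on with
  | C a => simp
  | add f g hf hg => simp [hf, hg]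
  | mul_X f i hf => simp [hf]

set_option maxHeartbeats 1000000 in
set_option synthInstance.maxHeartbeats 400000 in
lemma mainDichotomy {Ω : Type*} [Field Ω] (k : Subfield Ω) {s : ℕ} (P : Fin s → Polynomial Ω) :
    ({x : Ω | ¬ LinearIndependent k (fun j => (P j).eval x)} ∩ (k : Set Ω)).Finite ∨
    ∀ x ∈ (k : Set Ω), ¬ LinearIndependent k (fun j => (P j).eval x) := by
  classical
  set b := Module.Basis.ofVectorSpace k Ω with hb
  set Q : Fin s → Module.Basis.ofVectorSpaceIndex k Ω → Polynomial k :=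
    fun j β => ∑ n ∈ (P j).support, Polynomial.C (b.repr ((P j).coeff n) β) * Polynomial.X ^ n
    with hQ
  have hQeval : ∀ (j) (β) (α : k), (Q j β).eval α = b.repr ((P j).eval (α : Ω)) β :=
    fun j β α => repr_eval k b (P j) α β
  set T : Finset (Module.Basis.ofVectorSpaceIndex k Ω) :=
    Finset.univ.biUnion fun j =>
      (P j).support.biUnion fun n => (b.repr ((P j).coeff n)).support with hT
  have hQ0 : ∀ (j) (β), β ∉ T → Q j β = 0 := by
    intro j β hβ
    rw [hQ]
    refine Finset.sum_eq_zero fun n hn => ?_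
    have : b.repr ((P j).coeff n) β = 0 := by
      by_contra h0
      refine hβ ?_
      rw [hT]
      refine Finset.mem_biUnion.mpr ⟨j, Finset.mem_univ _, ?_⟩
      exact Finset.mem_biUnion.mpr ⟨n, hn, Finsupp.mem_support_iff.mpr h0⟩
    rw [this, map_zero, zero_mul]
  set N : Fin s → (↥T → Polynomial k) := fun j β => Q j β.1 with hN
  by_cases hind : LinearIndependent (Polynomial k) N
  · -- generically independent: finitely many bad points
    left
    set F := FractionRing (Polynomial k)
    have hNF := li_frac (F := F) N hind
    obtain ⟨U, hU⟩ := exists_dual _ hNF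
    obtain ⟨d, hd⟩ := IsLocalization.exist_integer_multiples (nonZeroDivisors (Polynomial k))
      Finset.univ (fun p : ↥T × Fin s => U p.1 p.2)
    choose! V hV using hd
    have hVd : ∀ (β : ↥T) (j' : Fin s),
        algebraMap (Polynomial k) F (V (β, j'))
          = algebraMap (Polynomial k) F (d : Polynomial k) * U β j' := by
      intro β j'
      have := hV (β, j') (Finset.mem_univ _)
      rw [this, Algebra.smul_def]
    have hpoly : ∀ j j', ∑ β : ↥T, Q j β.1 * V (β, j')
        = if j' = j then (d : Polynomial k) else 0 := by
      intro j j'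
      apply IsFractionRing.injective (Polynomial k) F
      rw [map_sum]
      calc ∑ β : ↥T, algebraMap (Polynomial k) F (Q j β.1 * V (β, j'))
          = algebraMap (Polynomial k) F (d : Polynomial k)
              * ∑ β : ↥T, algebraMap (Polynomial k) F (N j β) * U β j' := by
            rw [Finset.mul_sum]
            refine Finset.sum_congr rfl fun β _ => ?_
            rw [map_mul, hVd β j', hN]
            ring
        _ = algebraMap (Polynomial k) F (if j' = j then (d : Polynomial k) else 0) := by
            rw [hU j j']
            split <;> simp
    have hd0 : (d : Polynomial k) ≠ 0 := nonZeroDivisors.coe_ne_zero d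
    have hgood : ∀ α : k, ¬ (d : Polynomial k).IsRoot α →
        LinearIndependent k (fun j => (P j).eval (α : Ω)) := by
      intro α hα
      rw [Fintype.linearIndependent_iff]
      intro c hc j'
      have h1 : ∀ β, ∑ j, c j * (Q j β).eval α = 0 := by
        intro β
        have h2 := congrArg (fun y => b.repr y β) hc
        simpa [map_sum, hQeval, Finset.sum_apply, Finsupp.coe_smul] using h2
      have h2 : c j' * (d : Polynomial k).eval α = 0 := by
        have e1 : ∀ j, c j * ((if j' = j then (d : Polynomial k) else 0).eval α)
            = ∑ β : ↥T, c j * ((Q j β.1).eval α * (V (β, j')).eval α) := by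
          intro j
          rw [← hpoly j j', Polynomial.eval_finset_sum, Finset.mul_sum]
          simp [Polynomial.eval_mul]
        calc c j' * (d : Polynomial k).eval α
            = ∑ j, c j * ((if j' = j then (d : Polynomial k) else 0).eval α) := by
              simp [apply_ite (Polynomial.eval α), mul_ite, mul_zero, Finset.sum_ite_eq]
          _ = ∑ j, ∑ β : ↥T, c j * ((Q j β.1).eval α * (V (β, j')).eval α) := by
              exact Finset.sum_congr rfl fun j _ => e1 j
          _ = ∑ β : ↥T, (∑ j, c j * (Q j β.1).eval α) * (V (β, j')).eval α := by
              rw [Finset.sum_comm]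
              refine Finset.sum_congr rfl fun β _ => ?_
              rw [Finset.sum_mul]
              refine Finset.sum_congr rfl fun j _ => by ring
          _ = 0 := by simp [h1]
      rcases mul_eq_zero.mp h2 with h | h
      · exact h
      · exact absurd h hα
    have hroots : ({α : k | (d : Polynomial k).IsRoot α}).Finite :=
      Polynomial.finite_setOf_isRoot hd0
    refine Set.Finite.subset (hroots.image (fun α : k => (α : Ω))) ?_
    rintro x ⟨hxS, hxk⟩
    obtain ⟨α, rfl⟩ : ∃ α : k, (α : Ω) = x := ⟨⟨x, hxk⟩, rfl⟩
    refine ⟨α, ?_, rfl⟩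
    by_contra hroot
    exact hxS (hgood α hroot)
  · -- globally dependent: all of k is bad
    right
    rw [Fintype.not_linearIndependent_iff] at hind
    obtain ⟨c, hsum, j₀, hj₀⟩ := hind
    have hrel0 : ∀ β, ∑ j, c j * Q j β = 0 := by
      intro β
      by_cases hβ : β ∈ T
      · have h2 := congrFun hsum ⟨β, hβ⟩
        simpa [hN, Finset.sum_apply, smul_eq_mul] using h2
      · simp [hQ0 _ _ hβ]
    have hg0 : Finset.univ.gcd c ≠ 0 := fun h =>
      hj₀ (Finset.gcd_eq_zero_iff.mp h j₀ (Finset.mem_univ _))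
    obtain ⟨c', hc', hgcd1⟩ := Finset.extract_gcd c ⟨j₀, Finset.mem_univ _⟩
    have hrel : ∀ β, ∑ j, c' j * Q j β = 0 := by
      intro β
      apply mul_left_cancel₀ hg0
      rw [mul_zero, Finset.mul_sum, ← hrel0 β]
      exact Finset.sum_congr rfl fun j _ => by
        rw [← mul_assoc, ← hc' j (Finset.mem_univ _)]
    intro x hx
    obtain ⟨α, rfl⟩ : ∃ α : k, (α : Ω) = x := ⟨⟨x, hx⟩, rfl⟩
    rw [Fintype.not_linearIndependent_iff]
    refine ⟨fun j => (c' j).eval α, ?_, ?_⟩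
    · apply b.repr.injective
      rw [map_sum, map_zero]
      ext β
      simp only [Finsupp.coe_finset_sum, Finset.sum_apply, map_smul, Finsupp.coe_smul,
        Pi.smul_apply, smul_eq_mul, Finsupp.coe_zero, Pi.zero_apply]
      norm_cast
      calc ∑ j, (c' j).eval α * (b.repr ((P j).eval (α : Ω)) β)
          = (∑ j, c' j * Q j β).eval α := by
            rw [Polynomial.eval_finset_sum]
            exact Finset.sum_congr rfl fun j _ => by rw [Polynomial.eval_mul, hQeval]
        _ = 0 := by rw [hrel β, Polynomial.eval_zero]
    · by_contra hall
      push_neg at hall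
      have hdvd : (Polynomial.X - Polynomial.C α) ∣ Finset.univ.gcd c' :=
        Finset.dvd_gcd fun j _ => Polynomial.dvd_iff_isRoot.mpr (hall j)
      rw [hgcd1] at hdvd
      exact Polynomial.not_isUnit_X_sub_C α (isUnit_of_dvd_one hdvd)


lemma mainDichotomy' {Ω : Type*} [Field Ω] (k : Subfield Ω) {s : ℕ}
    (p : Fin s → MvPolynomial (Fin 1) Ω) :
    ({x : Ω | ¬ LinearIndependent k (fun j => MvPolynomial.eval (fun _ : Fin 1 => x) (p j))}
        ∩ (k : Set Ω)).Finite ∨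
      ∀ x ∈ (k : Set Ω),
        ¬ LinearIndependent k (fun j => MvPolynomial.eval (fun _ : Fin 1 => x) (p j)) := by
  have heq : ∀ x : Ω, (fun j => (MvPolynomial.aeval
        (fun _ : Fin 1 => (Polynomial.X : Polynomial Ω)) (p j)).eval x)
      = fun j => MvPolynomial.eval (fun _ : Fin 1 => x) (p j) :=
    fun x => funext fun j => (mv_eval (p j) x).symm
  rcases mainDichotomy k
      (fun j => MvPolynomial.aeval (fun _ : Fin 1 => (Polynomial.X : Polynomial Ω)) (p j)) with
    hfin | hall
  · left
    refine hfin.subset ?_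
    rintro x ⟨hx, hxk⟩
    exact ⟨by rw [Set.mem_setOf_eq, heq x]; exact hx, hxk⟩
  · right
    intro x hx
    have := hall x hx
    rw [heq x] at this
    exact this

/-- Every proper closed subset of `k` in the subspace topology induced by the
pair topology on `Ω` is finite. -/
theorem stmt10 {Ω : Type*} [Field Ω] [IsAlgClosed Ω]
    (k : Subfield Ω) (hk : IsAlgClosed k) (hproper : k ≠ ⊤)
    (C : Set (Fin 1 → Ω)) (hC : IsPairClosed k C)
    (hproperSub : {x : Ω | (fun _ : Fin 1 => x) ∈ C} ∩ (k : Set Ω) ≠ (k : Set Ω)) :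
    ({x : Ω | (fun _ : Fin 1 => x) ∈ C} ∩ (k : Set Ω)).Finite := by
  classical
  obtain ⟨t, B, hB, rfl⟩ := hC
  have key : ∀ i : Fin t, ({x : Ω | (fun _ : Fin 1 => x) ∈ B i} ∩ (k : Set Ω)).Finite ∨
      ({x : Ω | (fun _ : Fin 1 => x) ∈ B i} ∩ (k : Set Ω)) = (k : Set Ω) := by
    intro i
    obtain ⟨m, ks, p, hBi⟩ := hB i
    by_cases hex : ∃ i' : Fin m,
        ({x : Ω | ¬ LinearIndependent k
            (fun j => MvPolynomial.eval (fun _ : Fin 1 => x) (p i' j))} ∩ (k : Set Ω)).Finite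
    · left
      obtain ⟨i', hf⟩ := hex
      refine hf.subset ?_
      rintro x ⟨hxB, hxk⟩
      rw [hBi] at hxB
      exact ⟨hxB i', hxk⟩
    · right
      have hall : ∀ (i' : Fin m), ∀ x ∈ (k : Set Ω),
          ¬ LinearIndependent k (fun j => MvPolynomial.eval (fun _ : Fin 1 => x) (p i' j)) := by
        intro i'
        rcases mainDichotomy' k (p i') with hf | h
        · exact absurd ⟨i', hf⟩ hex
        · exact h
      refine Set.eq_of_subset_of_subset Set.inter_subset_right fun x hx => ?_
      refine ⟨?_, hx⟩
      rw [hBi]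
      exact fun i' => hall i' x hx
  have htrace : {x : Ω | (fun _ : Fin 1 => x) ∈ ⋃ i, B i} ∩ (k : Set Ω)
      = ⋃ i, ({x : Ω | (fun _ : Fin 1 => x) ∈ B i} ∩ (k : Set Ω)) := by
    ext x
    simp only [Set.mem_inter_iff, Set.mem_setOf_eq, Set.mem_iUnion]
    tauto
  rw [htrace] at hproperSub ⊢
  by_cases hfin : ∀ i, ({x : Ω | (fun _ : Fin 1 => x) ∈ B i} ∩ (k : Set Ω)).Finite
  · exact Set.finite_iUnion hfin
  · exfalso
    push_neg at hfin
    obtain ⟨i, hi⟩ := hfin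
    rcases key i with h | h
    · exact hi h
    apply hproperSub
    refine Set.eq_of_subset_of_subset
      (Set.iUnion_subset fun _ => Set.inter_subset_right) fun x hx => ?_
    exact Set.mem_iUnion.mpr ⟨i, by rw [h]; exact hx⟩
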